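/- arXiv:1304.0004 — 3 statements merged into one kernel-verified Lean document; each statement's English description precedes it below -/
import Mathlib

section
/- Let A be an m×n real matrix such that every set of 2k columns of A is linearly independent (where 2k ≤ m ≤ n). If x̃ ∈ ℝⁿ has at most k nonzero entries, then x̃ is the unique vector with at most k nonzero entries satisfying A x = A x̃. -/
/-- If every set of 2k columns of A is linearly independent
(2k ≤ m ≤ n), and x̃ has at most k nonzero entries, then x̃ is the unique
vector with at most k nonzero entries satisfying A x = A x̃. -/
theorem stmt0 (m n k : ℕ) (hkm : 2 * k ≤ m) (hmn : m ≤ n)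
    (A : Matrix (Fin m) (Fin n) ℝ)
    (hcols : ∀ S : Finset (Fin n), S.card = 2 * k →
      LinearIndependent ℝ (fun j : S => (A.transpose j.1)))
    (xt : Fin n → ℝ)
    (hxt : (Finset.univ.filter (fun i => xt i ≠ 0)).card ≤ k) :
    ∀ x : Fin n → ℝ,
      (Finset.univ.filter (fun i => x i ≠ 0)).card ≤ k →
      A.mulVec x = A.mulVec xt → x = xt := by
  intro x hx hAx
  have hn : 2 * k ≤ n := hkm.trans hmn
  set d : Fin n → ℝ := fun j => x j - xt j with hd
  have hsupp : (Finset.univ.filter (fun i => d i ≠ 0)) ⊆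
      (Finset.univ.filter (fun i => x i ≠ 0)) ∪
        (Finset.univ.filter (fun i => xt i ≠ 0)) := by
    intro i hi
    simp only [Finset.mem_filter, Finset.mem_union, Finset.mem_univ, true_and] at hi ⊢
    by_contra h
    push_neg at h
    exact hi (by show x i - xt i = 0; rw [h.1, h.2, sub_zero])
  have hcard : (Finset.univ.filter (fun i => d i ≠ 0)).card ≤ 2 * k := by
    calc (Finset.univ.filter (fun i => d i ≠ 0)).card
        ≤ _ := Finset.card_le_card hsupp
      _ ≤ _ + _ := Finset.card_union_le _ _
      _ ≤ k + k := add_le_add hx hxt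
      _ = 2 * k := by ring
  obtain ⟨S, hSsub, hScard⟩ := Finset.exists_superset_card_eq hcard (by simpa using hn)
  have hdS : ∀ j : Fin n, j ∉ S → d j = 0 := by
    intro j hj
    by_contra hjz
    exact hj (hSsub (by simp [hjz]))
  have hAd : A.mulVec d = 0 := by
    have h1 : A.mulVec d = A.mulVec x - A.mulVec xt := by
      funext i
      simp [hd, Matrix.mulVec, dotProduct, mul_sub, Finset.sum_sub_distrib]
    rw [h1, hAx, sub_self]
  have hli := hcols S hScard
  rw [Fintype.linearIndependent_iff] at hli
  have hzero : ∀ j : S, d j.1 = 0 := by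
    apply hli (fun j : S => d j.1)
    funext i
    have h2 : ∑ j ∈ S, A i j * d j = 0 := by
      have h3 : A.mulVec d i = ∑ j ∈ S, A i j * d j := by
        simp only [Matrix.mulVec, dotProduct]
        exact (Finset.sum_subset (Finset.subset_univ S)
          (fun j _ hj => by rw [hdS j hj, mul_zero])).symm
      rw [← h3, hAd]
      rfl
    calc (∑ j : S, d j.1 • A.transpose j.1) i
        = ∑ j : S, d j.1 * A i j.1 := by
          simp [Finset.sum_apply, Matrix.transpose_apply]
      _ = ∑ j ∈ S, d j * A i j := Finset.sum_coe_sort S (fun j => d j * A i j)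
      _ = ∑ j ∈ S, A i j * d j := by simp [mul_comm]
      _ = 0 := h2
  funext j
  by_cases hj : j ∈ S
  · have := hzero ⟨j, hj⟩
    simpa [hd, sub_eq_zero] using this
  · have := hdS j hj
    simpa [hd, sub_eq_zero] using this
end

section
/- For every β ∈ (0,1) there exists α ∈ (β,1) satisfying (1−β)·√(2/π)·exp(−(erfinv((1−α)/(1−β)))²)/α − √2·erfinv((1−α)/(1−β)) = 0, where erfinv is the inverse of the error function erf on (0,1). -/
open Real

noncomputable def erf (y : ℝ) : ℝ := (2 / Real.sqrt π) * ∫ t in (0:ℝ)..y, Real.exp (-(t ^ 2))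

lemma gauss_integrable : MeasureTheory.Integrable (fun t : ℝ => Real.exp (-(t ^ 2))) := by
  have := integrable_exp_neg_mul_sq (b := 1) one_pos
  simpa using this

lemma gauss_intInt (a b : ℝ) : IntervalIntegrable (fun t : ℝ => Real.exp (-(t ^ 2))) MeasureTheory.volume a b :=
  gauss_integrable.intervalIntegrable

lemma erf_continuous : Continuous erf := by
  have := gauss_integrable.continuous_primitive (0 : ℝ)
  exact continuous_const.mul this

lemma erf_strictMono : StrictMono erf := by
  intro a b hab
  have h : (0:ℝ) < ∫ t in a..b, Real.exp (-(t ^ 2)) :=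
    intervalIntegral.intervalIntegral_pos_of_pos (gauss_intInt a b) (fun x => Real.exp_pos _) hab
  have hπ : 0 < (2 : ℝ) / Real.sqrt π := by positivity
  have key : (∫ t in (0:ℝ)..a, Real.exp (-(t ^ 2))) < ∫ t in (0:ℝ)..b, Real.exp (-(t ^ 2)) := by
    have := intervalIntegral.integral_add_adjacent_intervals (gauss_intInt 0 a) (gauss_intInt a b)
    linarith
  exact mul_lt_mul_of_pos_left key hπ

lemma erf_zero : erf 0 = 0 := by simp [erf]

lemma erf_pos {c : ℝ} (hc : 0 < c) : 0 < erf c := by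
  have := erf_strictMono hc
  rwa [erf_zero] at this

lemma int_lt_half_sqrt_pi (c : ℝ) : (∫ t in (0:ℝ)..c, Real.exp (-(t ^ 2))) < Real.sqrt π / 2 := by
  have hIoi : (∫ x in Set.Ioi (0:ℝ), Real.exp (-(x ^ 2))) = Real.sqrt π / 2 := by
    have := integral_gaussian_Ioi (1 : ℝ)
    simpa using this
  have hs : (∫ t in (0:ℝ)..(max c 0 + 1), Real.exp (-(t ^ 2))) ≤ Real.sqrt π / 2 := by
    rw [← hIoi, intervalIntegral.integral_of_le (by positivity)]
    apply MeasureTheory.setIntegral_mono_set gauss_integrable.integrableOn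
    · filter_upwards with x using (Real.exp_pos _).le
    · filter_upwards with x hx
      exact Set.mem_Ioc.mp hx |>.1
  have hlt : (∫ t in (0:ℝ)..c, Real.exp (-(t ^ 2))) < ∫ t in (0:ℝ)..(max c 0 + 1), Real.exp (-(t ^ 2)) := by
    have hcb : c < max c 0 + 1 := lt_of_le_of_lt (le_max_left c 0) (by linarith)
    have hpos : (0:ℝ) < ∫ t in c..(max c 0 + 1), Real.exp (-(t ^ 2)) :=
      intervalIntegral.intervalIntegral_pos_of_pos (gauss_intInt _ _) (fun x => Real.exp_pos _) hcb
    have := intervalIntegral.integral_add_adjacent_intervals (gauss_intInt 0 c) (gauss_intInt c (max c 0 + 1))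
    linarith
  linarith

lemma erf_lt_one (c : ℝ) : erf c < 1 := by
  have h := int_lt_half_sqrt_pi c
  have hπ : 0 < Real.sqrt π := Real.sqrt_pos.mpr Real.pi_pos
  have h2 : erf c < (2 / Real.sqrt π) * (Real.sqrt π / 2) :=
    mul_lt_mul_of_pos_left h (by positivity)
  have h3 : (2 / Real.sqrt π) * (Real.sqrt π / 2) = 1 := by field_simp
  linarith

/-- For every β ∈ (0,1) there exists α ∈ (β,1) solving the
fundamental ℓ1-performance equation, where erfinv is the inverse of erf on (0,1). -/
theorem stmt8 (β : ℝ) (hβ : β ∈ Set.Ioo (0:ℝ) 1)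
    (erfinv : ℝ → ℝ)
    (herfinv : ∀ t ∈ Set.Ioo (0:ℝ) 1, 0 < erfinv t ∧ erf (erfinv t) = t) :
    ∃ α : ℝ, α ∈ Set.Ioo β 1 ∧
      (1 - β) * Real.sqrt (2 / π) *
          Real.exp (-(erfinv ((1 - α) / (1 - β))) ^ 2) / α -
        Real.sqrt 2 * erfinv ((1 - α) / (1 - β)) = 0 := by
  obtain ⟨hβ0, hβ1⟩ := hβ
  -- the reparametrized function
  set g : ℝ → ℝ := fun c =>
    (1 - β) * Real.sqrt (2 / π) * Real.exp (-c ^ 2) / (1 - (1 - β) * erf c)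
      - Real.sqrt 2 * c with hg
  have hβ' : (0:ℝ) < 1 - β := by linarith
  have hdenom : ∀ c : ℝ, 0 ≤ c → β ≤ 1 - (1 - β) * erf c := by
    intro c hc
    have h1 : erf c ≤ 1 := (erf_lt_one c).le
    nlinarith
  have hgcont : ContinuousOn g (Set.Icc 0 (1 + Real.sqrt (2/π) / β)) := by
    apply ContinuousOn.sub
    · apply ContinuousOn.div
      · exact (continuous_const.mul (Real.continuous_exp.comp (by continuity))).continuousOn
      · exact (continuous_const.sub (continuous_const.mul erf_continuous)).continuousOn
      · intro x hx
        have := hdenom x hx.1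
        linarith
    · exact (continuous_const.mul continuous_id).continuousOn
  set C : ℝ := 1 + Real.sqrt (2/π) / β with hC
  have hC0 : 0 < C := by positivity
  have hg0 : 0 < g 0 := by
    simp only [hg, erf_zero]
    have : (0:ℝ) < Real.sqrt (2/π) := Real.sqrt_pos.mpr (by positivity)
    simp only [mul_zero, sub_zero, div_one]
    positivity
  have hsq2 : (1:ℝ) ≤ Real.sqrt 2 := by
    rw [show (1:ℝ) = Real.sqrt 1 by simp]
    exact Real.sqrt_le_sqrt (by norm_num)
  have hgC : g C < 0 := by
    have hd : β ≤ 1 - (1 - β) * erf C := hdenom C hC0.le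
    have hexp : Real.exp (-C ^ 2) ≤ 1 := by
      rw [show (1:ℝ) = Real.exp 0 by simp]
      exact Real.exp_le_exp.mpr (by nlinarith)
    have hs : 0 < Real.sqrt (2/π) := Real.sqrt_pos.mpr (by positivity)
    have h1 : (1 - β) * Real.sqrt (2 / π) * Real.exp (-C ^ 2) / (1 - (1 - β) * erf C)
        ≤ Real.sqrt (2/π) / β := by
      apply div_le_div₀ (by positivity) _ hβ0 hd
      calc (1 - β) * Real.sqrt (2 / π) * Real.exp (-C ^ 2)
          ≤ (1 - β) * Real.sqrt (2 / π) := mul_le_of_le_one_right (by positivity) hexp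
        _ ≤ Real.sqrt (2 / π) := by nlinarith
    have h2 : Real.sqrt (2/π) / β < Real.sqrt 2 * C := by
      have hA : Real.sqrt (2/π)/β < C := by rw [hC]; linarith
      exact hA.trans_le (le_mul_of_one_le_left hC0.le hsq2)
    simp only [hg]
    linarith
  -- IVT
  have hmem : (0:ℝ) ∈ Set.Icc (g C) (g 0) := ⟨hgC.le, hg0.le⟩
  obtain ⟨c, hcmem, hgc⟩ := intermediate_value_Icc' hC0.le hgcont hmem
  have hc0 : 0 < c := by
    rcases eq_or_lt_of_le hcmem.1 with h | h
    · exfalso; rw [← h] at hgc; linarith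
    · exact h
  -- define α
  refine ⟨1 - (1 - β) * erf c, ⟨?_, ?_⟩, ?_⟩
  · have := erf_lt_one c; nlinarith
  · have := erf_pos hc0; nlinarith
  · have ht : (1 - (1 - (1 - β) * erf c)) / (1 - β) = erf c := by
      field_simp
      ring
    rw [ht]
    have htmem : erf c ∈ Set.Ioo (0:ℝ) 1 := ⟨erf_pos hc0, erf_lt_one c⟩
    obtain ⟨hpos, heq⟩ := herfinv _ htmem
    have hinv : erfinv (erf c) = c := erf_strictMono.injective heq
    rw [hinv]
    simpa [hg] using hgc
end

section
/- Let A be an m×n real matrix and let x̃ ∈ ℝⁿ have support S = {i : x̃ᵢ ≠ 0}. Suppose that for every nonzero w in the null space of A, |Σ_{i∈S} sign(x̃ᵢ)·wᵢ| < Σ_{i∉S} |wᵢ|. Then x̃ is the unique minimizer of ‖x‖₁ subject to A x = A x̃. -/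
/-- If for every nonzero w in the null space of A,
|Σ_{i∈S} sign(x̃ᵢ) wᵢ| < Σ_{i∉S} |wᵢ| where S is the support of x̃, then x̃ is the
unique minimizer of ‖x‖₁ subject to Ax = Ax̃. -/
theorem stmt14 (m n : ℕ) (A : Matrix (Fin m) (Fin n) ℝ) (xt : Fin n → ℝ)
    (S : Finset (Fin n)) (hS : S = Finset.univ.filter (fun i => xt i ≠ 0))
    (hns : ∀ w : Fin n → ℝ, A.mulVec w = 0 → w ≠ 0 →
      |∑ i ∈ S, Real.sign (xt i) * w i| < ∑ i ∈ Sᶜ, |w i|) :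
    ∀ x : Fin n → ℝ, A.mulVec x = A.mulVec xt → x ≠ xt →
      ∑ i, |xt i| < ∑ i, |x i| := by
  intro x hAx hxne
  set w : Fin n → ℝ := x - xt with hwdef
  have hw : A.mulVec w = 0 := by
    simp [hwdef, Matrix.mulVec_sub, hAx]
  have hw0 : w ≠ 0 := by
    intro h
    apply hxne
    funext i
    have := congrFun h i
    simpa [hwdef, sub_eq_zero] using this
  have hlt := hns w hw hw0
  have hpos : 0 < ∑ i ∈ S, Real.sign (xt i) * w i + ∑ i ∈ Sᶜ, |w i| := by
    have := (abs_lt.mp hlt).1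
    linarith
  have hx : ∑ i, |x i| = ∑ i ∈ S, |x i| + ∑ i ∈ Sᶜ, |x i| :=
    (Finset.sum_add_sum_compl S _).symm
  have hxt : ∑ i, |xt i| = ∑ i ∈ S, |xt i| := by
    rw [← Finset.sum_add_sum_compl S]
    have h0 : ∑ i ∈ Sᶜ, |xt i| = 0 := Finset.sum_eq_zero (fun i hi => by
      simp [hS, Finset.mem_compl] at hi
      simp [hi])
    linarith
  have hsum2 : ∑ i ∈ Sᶜ, |x i| = ∑ i ∈ Sᶜ, |w i| := by
    refine Finset.sum_congr rfl (fun i hi => ?_)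
    simp [hS, Finset.mem_compl] at hi
    simp [hwdef, hi]
  have hSbound : ∀ i ∈ S, |xt i| + Real.sign (xt i) * w i ≤ |x i| := by
    intro i hi
    have hne : xt i ≠ 0 := by simpa [hS] using hi
    have hsx : Real.sign (xt i) * xt i = |xt i| := by
      rcases lt_or_gt_of_ne hne with h | h
      · rw [Real.sign_of_neg h, abs_of_neg h]; ring
      · rw [Real.sign_of_pos h, abs_of_pos h]; ring
    have h1 : Real.sign (xt i) * x i ≤ |x i| := by
      calc Real.sign (xt i) * x i ≤ |Real.sign (xt i) * x i| := le_abs_self _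
        _ = |Real.sign (xt i)| * |x i| := abs_mul _ _
        _ ≤ 1 * |x i| := by
            apply mul_le_mul_of_nonneg_right _ (abs_nonneg _)
            rcases lt_or_gt_of_ne hne with h | h
            · simp [Real.sign_of_neg h]
            · simp [Real.sign_of_pos h]
        _ = |x i| := one_mul _
    have hxeq : x i = xt i + w i := by simp [hwdef]
    have h2 : Real.sign (xt i) * x i = |xt i| + Real.sign (xt i) * w i := by
      rw [hxeq, ← hsx]; ring
    linarith
  have hsum1 : ∑ i ∈ S, (|xt i| + Real.sign (xt i) * w i) ≤ ∑ i ∈ S, |x i| :=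
    Finset.sum_le_sum hSbound
  rw [Finset.sum_add_distrib] at hsum1
  rw [hx, hxt, hsum2]
  linarith
end
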